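/- Every element of the group G generated by the transposition f = (ĥ0, č0) and the shift σ on X = (ℤ∪{∞})×{0,1} can be written in the form σ^a ∘ f_{b_k} ∘ ⋯ ∘ f_{b_1} with a ∈ ℤ and b_1 < b_2 < ⋯ < b_k ∈ ℤ, where f_n = σ^{-n} ∘ f ∘ σ^n. -/

import Mathlib

open Filter Topology

noncomputable section

/-- The shift `s ↦ s - 1` on the one-point compactification `ℤ ∪ {∞}`, fixing `∞`. -/
def shiftOP : Equiv.Perm (OnePoint ℤ) :=
  (Equiv.optionCongr (Equiv.subRight (1 : ℤ)) : Equiv.Perm (Option ℤ))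

/-- The phase space `X = (ℤ ∪ {∞}) × {0,1}`. -/
abbrev LampX : Type := OnePoint ℤ × Bool

/-- The transposition `f` swapping `(0,1)` and `(0,0)`. -/
def lampF : Equiv.Perm LampX :=
  haveI : DecidableEq LampX := Classical.decEq _
  Equiv.swap (((0 : ℤ) : OnePoint ℤ), true) (((0 : ℤ) : OnePoint ℤ), false)

/-- The shift `σ` on `X`, decrementing the integer coordinate. -/
def lampSigma : Equiv.Perm LampX := (shiftOP).prodCongr (Equiv.refl Bool)

/-- `f_n = σ^{-n} ∘ f ∘ σ^n`. -/
def lampfn (n : ℤ) : Equiv.Perm LampX := lampSigma ^ (-n) * lampF * lampSigma ^ n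

/-- The Lamplighter group `G = ⟨f, σ⟩`. -/
def lampG : Subgroup (Equiv.Perm LampX) := Subgroup.closure {lampF, lampSigma}

/-- For `l = [b_1, …, b_k]`, the composition `f_{b_k} ∘ ⋯ ∘ f_{b_1}`. -/
def lampProd (l : List ℤ) : Equiv.Perm LampX := (l.reverse.map lampfn).prod

local instance : DecidableEq LampX := Classical.decEq _

lemma lampSigma_apply (m : ℤ) (b : Bool) :
    lampSigma ((m : OnePoint ℤ), b) = (((m - 1 : ℤ) : OnePoint ℤ), b) := by
  rfl

lemma lampSigma_inv_apply (m : ℤ) (b : Bool) :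
    lampSigma⁻¹ ((m : OnePoint ℤ), b) = (((m + 1 : ℤ) : OnePoint ℤ), b) := by
  have := lampSigma_apply (m + 1) b
  simp only [add_sub_cancel_right] at this
  rw [← this]
  simp

lemma lampSigma_zpow_apply (k m : ℤ) (b : Bool) :
    (lampSigma ^ k) ((m : OnePoint ℤ), b) = (((m - k : ℤ) : OnePoint ℤ), b) := by
  induction k using Int.induction_on with
  | zero => simp
  | succ k ih =>
      rw [show ((k : ℤ) + 1) = 1 + k by ring, zpow_add, zpow_one,
        Equiv.Perm.mul_apply, ih]
      rw [lampSigma_apply]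
      congr 2
      ring
  | pred k ih =>
      rw [show (-(k : ℤ) - 1) = -1 + -k by ring, zpow_add,
        Equiv.Perm.mul_apply, ih, zpow_neg_one, lampSigma_inv_apply]
      congr 2
      ring

lemma lampfn_eq_swap (n : ℤ) :
    lampfn n = Equiv.swap ((n : OnePoint ℤ), true) ((n : OnePoint ℤ), false) := by
  have h := Equiv.swap_apply_apply (lampSigma ^ (-n))
    (((0 : ℤ) : OnePoint ℤ), true) (((0 : ℤ) : OnePoint ℤ), false)
  rw [lampSigma_zpow_apply, lampSigma_zpow_apply] at h
  simp only [zero_sub, neg_neg] at h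
  rw [h, lampfn, lampF]
  congr 1
  rw [← zpow_neg, neg_neg]

lemma lampfn_comm (m n : ℤ) : Commute (lampfn m) (lampfn n) := by
  rcases eq_or_ne m n with rfl | h
  · exact Commute.refl _
  · apply Equiv.Perm.Disjoint.commute
    intro x
    rw [lampfn_eq_swap, lampfn_eq_swap]
    by_cases hx : x = ((m : OnePoint ℤ), true) ∨ x = ((m : OnePoint ℤ), false)
    · right
      have h1 : x ≠ ((n : OnePoint ℤ), true) := by
        rcases hx with rfl | rfl <;> simp [OnePoint.coe_eq_coe, h]
      have h2 : x ≠ ((n : OnePoint ℤ), false) := by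
        rcases hx with rfl | rfl <;> simp [OnePoint.coe_eq_coe, h]
      exact Equiv.swap_apply_of_ne_of_ne h1 h2
    · left
      push_neg at hx
      exact Equiv.swap_apply_of_ne_of_ne hx.1 hx.2

lemma lampfn_mul_self (n : ℤ) : lampfn n * lampfn n = 1 := by
  rw [lampfn_eq_swap, Equiv.swap_mul_self]

lemma pairwise_comm (l : List ℤ) : (l.map lampfn).Pairwise Commute := by
  induction l with
  | nil => simp
  | cons a l ih =>
      simp only [List.map_cons, List.pairwise_cons]
      exact ⟨fun b hb => by
        rcases List.mem_map.mp hb with ⟨c, _, rfl⟩; exact lampfn_comm a c, ih⟩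

lemma lampProd_eq (l : List ℤ) : lampProd l = (l.map lampfn).prod :=
  List.Perm.prod_eq' ((List.reverse_perm l).map lampfn) (pairwise_comm l.reverse)

lemma lampProd_cons (n : ℤ) (l : List ℤ) :
    lampProd (n :: l) = lampfn n * lampProd l := by
  rw [lampProd_eq, lampProd_eq, List.map_cons, List.prod_cons]

lemma lampProd_perm {l l' : List ℤ} (h : l.Perm l') : lampProd l = lampProd l' := by
  rw [lampProd_eq, lampProd_eq]
  exact List.Perm.prod_eq' (h.map lampfn) (pairwise_comm l)

/-- `lampE s` is the product of `lampfn` over a finite set. -/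
def lampE (s : Finset ℤ) : Equiv.Perm LampX := lampProd (s.sort (· ≤ ·))

lemma lampE_empty : lampE ∅ = 1 := by
  simp [lampE, lampProd]

lemma lampE_insert {n : ℤ} {s : Finset ℤ} (h : n ∉ s) :
    lampE (insert n s) = lampfn n * lampE s := by
  rw [lampE, lampE, ← lampProd_cons]
  apply lampProd_perm
  refine Multiset.coe_eq_coe.mp ?_
  rw [Finset.sort_eq]
  have : ((n :: Finset.sort s (· ≤ ·) : List ℤ) : Multiset ℤ) = n ::ₘ (s.sort (· ≤ ·)) :=
    rfl
  rw [this, Finset.sort_eq, Finset.insert_val,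
    Multiset.ndinsert_of_notMem (fun hm => h (Finset.mem_def.mpr hm))]

lemma lampE_mem {n : ℤ} {t : Finset ℤ} (h : n ∈ t) :
    lampE t = lampfn n * lampE (t.erase n) := by
  conv_lhs => rw [← Finset.insert_erase h]
  rw [lampE_insert (Finset.notMem_erase n t)]

lemma lampE_symmDiff (s t : Finset ℤ) : lampE (symmDiff s t) = lampE s * lampE t := by
  induction s using Finset.induction_on generalizing t with
  | empty =>
      rw [show (∅ : Finset ℤ) = (⊥ : Finset ℤ) from rfl, bot_symmDiff]
      simp [lampE_empty]
  | @insert n s hns ih =>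
      by_cases hnt : n ∈ t
      · have h1 : symmDiff (insert n s) t = (symmDiff s t).erase n := by
          ext x
          by_cases hx : x = n
          · subst hx; simp [Finset.mem_symmDiff, hns, hnt]
          · simp only [Finset.mem_symmDiff, Finset.mem_insert, Finset.mem_erase, hx,
              false_or, ne_eq, not_false_eq_true, true_and]
            try tauto
        have h2 : n ∈ symmDiff s t := by simp [Finset.mem_symmDiff, hns, hnt]
        rw [h1, lampE_insert hns, mul_assoc, ← ih, lampE_mem h2, ← mul_assoc,
          lampfn_mul_self, one_mul]
      · have h1 : symmDiff (insert n s) t = insert n (symmDiff s t) := by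
          ext x
          by_cases hx : x = n
          · subst hx; simp [Finset.mem_symmDiff, hns, hnt]
          · simp only [Finset.mem_symmDiff, Finset.mem_insert, Finset.mem_erase, hx,
              false_or, ne_eq, not_false_eq_true, true_and]
            try tauto
        have h2 : n ∉ symmDiff s t := by simp [Finset.mem_symmDiff, hns, hnt]
        rw [h1, lampE_insert h2, ih, lampE_insert hns, mul_assoc]

lemma lampE_mul_self (s : Finset ℤ) : lampE s * lampE s = 1 := by
  rw [← lampE_symmDiff, symmDiff_self]
  simpa using lampE_empty

lemma sigma_conj_fn (a n : ℤ) :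
    lampSigma ^ a * lampfn n * lampSigma ^ (-a) = lampfn (n - a) := by
  simp only [lampfn]
  group

lemma sigma_conj_E (a : ℤ) (s : Finset ℤ) :
    lampSigma ^ a * lampE s * lampSigma ^ (-a) = lampE (s.image (fun n => n - a)) := by
  induction s using Finset.induction_on with
  | empty => simp [lampE_empty]
  | @insert n s hns ih =>
      have hmem : n - a ∉ s.image (fun x => x - a) := by
        intro h
        rcases Finset.mem_image.mp h with ⟨x, hx, hxe⟩
        have : x = n := by omega
        exact hns (this ▸ hx)
      rw [Finset.image_insert, lampE_insert hmem, lampE_insert hns,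
        ← ih, ← sigma_conj_fn a n]
      group

/-- Every element of the Lamplighter group `G = ⟨f, σ⟩` can be written in the form
`σ^a ∘ f_{b_k} ∘ ⋯ ∘ f_{b_1}` with `a ∈ ℤ` and `b_1 < ⋯ < b_k` in `ℤ`. -/
theorem lamplighter_normal_form_exists :
    ∀ g ∈ lampG, ∃ (a : ℤ) (l : List ℤ),
      l.Pairwise (· < ·) ∧ g = lampSigma ^ a * lampProd l := by
  have key : ∀ g ∈ lampG, ∃ (a : ℤ) (s : Finset ℤ), g = lampSigma ^ a * lampE s := by
    intro g hg
    induction hg using Subgroup.closure_induction with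
    | mem x hx =>
        rcases hx with rfl | rfl
        · refine ⟨0, {0}, ?_⟩
          simp [lampE, Finset.sort_singleton, lampProd, lampfn]
        · exact ⟨1, ∅, by simp [lampE_empty]⟩
    | one => exact ⟨0, ∅, by simp [lampE_empty]⟩
    | mul x y _ _ hx hy =>
        obtain ⟨a, s, rfl⟩ := hx
        obtain ⟨b, t, rfl⟩ := hy
        refine ⟨a + b, symmDiff (s.image (fun n => n - (-b))) t, ?_⟩
        rw [lampE_symmDiff, ← sigma_conj_E (-b) s]
        group
    | inv x _ hx =>
        obtain ⟨a, s, rfl⟩ := hx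
        refine ⟨-a, s.image (fun n => n - a), ?_⟩
        have h2 : (lampE s)⁻¹ = lampE s := inv_eq_of_mul_eq_one_right (lampE_mul_self s)
        rw [← sigma_conj_E a s, mul_inv_rev, h2]
        group
  intro g hg
  obtain ⟨a, s, rfl⟩ := key g hg
  exact ⟨a, s.sort (· ≤ ·), (Finset.sortedLT_sort s).pairwise, rfl⟩

end
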